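/- For every n ≥ 2 and every A ⊆ [n], one has f_n(A) ≥ 2·f_{n−1}(A ∩ [n−1]); consequently, for every n ≥ 1 and every A ⊆ [n], f_n(A) ≥ 2^{n−1}. -/

import Mathlib

/-- `σ` is in the set-alternating domain of `A` on alternatives `{1,…,n}`
(alternative `m` is represented by the index `m-1 : Fin n`; `σ x` is the rank
of alternative `x`, smaller rank = better). For every triple `i < j < k`:
if the middle alternative `j` (whose 1-based name is `j+1`) is in `A`, then
`i` is never ranked below both `j` and `k` (1N3); otherwise `k` is never
ranked above both `i` and `j` (3N1). -/
def inSetAltDomain (n : ℕ) (A : Finset ℕ) (σ : Equiv.Perm (Fin n)) : Prop :=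
  ∀ i j k : Fin n, i < j → j < k →
    (((j : ℕ) + 1 ∈ A) → ¬ (σ j < σ i ∧ σ k < σ i)) ∧
    (((j : ℕ) + 1 ∉ A) → ¬ (σ k < σ i ∧ σ k < σ j))

/-- The set-alternating domain `D_n(A)`. -/
def setAltDomain (n : ℕ) (A : Finset ℕ) : Set (Equiv.Perm (Fin n)) :=
  {σ | inSetAltDomain n A σ}

/-- `f_n(A)`, the cardinality of `D_n(A)`. -/
noncomputable def fsize (n : ℕ) (A : Finset ℕ) : ℕ := (setAltDomain n A).ncard

/-! ### Auxiliary constructions -/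

/-- Extend a permutation of `Fin k` to `Fin (k+1)` by putting the new element last. -/
def ext0 {k : ℕ} (σ : Equiv.Perm (Fin k)) : Equiv.Perm (Fin (k+1)) where
  toFun := Fin.snoc (fun x => (σ x).castSucc) (Fin.last k)
  invFun := Fin.snoc (fun x => (σ.symm x).castSucc) (Fin.last k)
  left_inv := by
    intro x
    induction x using Fin.lastCases with
    | last => simp
    | cast x => simp
  right_inv := by
    intro x
    induction x using Fin.lastCases with
    | last => simp
    | cast x => simp

@[simp] lemma ext0_castSucc {k : ℕ} (σ : Equiv.Perm (Fin k)) (x : Fin k) :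
    ext0 σ x.castSucc = (σ x).castSucc := by simp [ext0, Equiv.coe_fn_mk]

@[simp] lemma ext0_last {k : ℕ} (σ : Equiv.Perm (Fin k)) :
    ext0 σ (Fin.last k) = Fin.last k := by simp [ext0, Equiv.coe_fn_mk]

lemma swapext_castSucc {k : ℕ} (σ : Equiv.Perm (Fin (k+1))) (c₀ x : Fin (k+1)) :
    (ext0 σ * Equiv.swap c₀.castSucc (Fin.last (k+1))) x.castSucc
      = if x = c₀ then Fin.last (k+1) else (σ x).castSucc := by
  rcases eq_or_ne x c₀ with rfl | h
  · simp [Equiv.Perm.mul_apply]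
  · rw [if_neg h, Equiv.Perm.mul_apply,
      Equiv.swap_apply_of_ne_of_ne (by simpa [Fin.castSucc_inj] using h)
        (Fin.castSucc_lt_last x).ne, ext0_castSucc]

lemma swapext_last {k : ℕ} (σ : Equiv.Perm (Fin (k+1))) (c₀ : Fin (k+1)) :
    (ext0 σ * Equiv.swap c₀.castSucc (Fin.last (k+1))) (Fin.last (k+1))
      = (σ c₀).castSucc := by
  rw [Equiv.Perm.mul_apply, Equiv.swap_apply_right, ext0_castSucc]

lemma not_last_lt {n : ℕ} (x : Fin (n+1)) : ¬ (Fin.last n < x) :=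
  Fin.not_lt.mpr (Fin.le_last x)

/-- The bottom extension stays in the domain. -/
lemma mem0 {k : ℕ} {A B : Finset ℕ} (hB : ∀ m : ℕ, m ≤ k + 1 → (m ∈ B ↔ m ∈ A))
    {σ : Equiv.Perm (Fin (k+1))} (hσ : inSetAltDomain (k+1) B σ) :
    inSetAltDomain (k+2) A (ext0 σ) := by
  intro i j k₂ hij hjk
  obtain ⟨i₀, rfl⟩ := Fin.exists_castSucc_eq.mpr (Fin.ne_last_of_lt (hij.trans hjk))
  obtain ⟨j₀, rfl⟩ := Fin.exists_castSucc_eq.mpr (Fin.ne_last_of_lt hjk)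
  have hij₀ : i₀ < j₀ := Fin.castSucc_lt_castSucc_iff.mp hij
  rcases eq_or_ne k₂ (Fin.last (k+1)) with rfl | hk
  · refine ⟨fun _ h => ?_, fun _ h => ?_⟩
    · exact not_last_lt _ (by simpa using h.2)
    · exact not_last_lt _ (by simpa using h.1)
  · obtain ⟨k₀, rfl⟩ := Fin.exists_castSucc_eq.mpr hk
    have hjk₀ : j₀ < k₀ := Fin.castSucc_lt_castSucc_iff.mp hjk
    have hmem : ((j₀ : ℕ) + 1 ∈ B ↔ (j₀ : ℕ) + 1 ∈ A) := hB _ (by omega)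
    obtain ⟨h1, h2⟩ := hσ i₀ j₀ k₀ hij₀ hjk₀
    refine ⟨fun hA' h => ?_, fun hA' h => ?_⟩
    · exact h1 (by simpa using hmem.mpr (by simpa using hA'))
        ⟨by simpa using h.1, by simpa using h.2⟩
    · exact h2 (by simpa using fun hb => hA' (by simpa using hmem.mp hb))
        ⟨by simpa using h.1, by simpa using h.2⟩

/-- Case `k+1 ∈ A`: swap with alternative `k+1` (index `Fin.last k`). -/
lemma mem1A {k : ℕ} {A B : Finset ℕ} (hB : ∀ m : ℕ, m ≤ k + 1 → (m ∈ B ↔ m ∈ A))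
    (hA : (k + 1 : ℕ) ∈ A)
    {σ : Equiv.Perm (Fin (k+1))} (hσ : inSetAltDomain (k+1) B σ) :
    inSetAltDomain (k+2) A (ext0 σ * Equiv.swap (Fin.last k).castSucc (Fin.last (k+1))) := by
  intro i j k₂ hij hjk
  obtain ⟨i₀, rfl⟩ := Fin.exists_castSucc_eq.mpr (Fin.ne_last_of_lt (hij.trans hjk))
  obtain ⟨j₀, rfl⟩ := Fin.exists_castSucc_eq.mpr (Fin.ne_last_of_lt hjk)
  have hij₀ : i₀ < j₀ := Fin.castSucc_lt_castSucc_iff.mp hij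
  have hi₀ : i₀ ≠ Fin.last k := Fin.ne_last_of_lt hij₀
  have ti : (ext0 σ * Equiv.swap (Fin.last k).castSucc (Fin.last (k+1))) i₀.castSucc
      = (σ i₀).castSucc := by rw [swapext_castSucc, if_neg hi₀]
  rcases eq_or_ne k₂ (Fin.last (k+1)) with rfl | hk
  · rw [swapext_last]
    rcases eq_or_ne j₀ (Fin.last k) with rfl | hj₀
    · rw [swapext_castSucc, if_pos rfl, ti]
      refine ⟨fun _ h => not_last_lt _ h.1, fun hnA _ => ?_⟩
      exact hnA (by simpa using hA)
    · have hj₀' : j₀ < Fin.last k := Fin.lt_last_iff_ne_last.mpr hj₀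
      rw [swapext_castSucc, if_neg hj₀, ti]
      have hmem : ((j₀ : ℕ) + 1 ∈ B ↔ (j₀ : ℕ) + 1 ∈ A) := hB _ (by omega)
      obtain ⟨h1, h2⟩ := hσ i₀ j₀ (Fin.last k) hij₀ hj₀'
      refine ⟨fun hA' h => ?_, fun hA' h => ?_⟩
      · exact h1 (by simpa using hmem.mpr (by simpa using hA'))
          ⟨by simpa using h.1, by simpa using h.2⟩
      · exact h2 (by simpa using fun hb => hA' (by simpa using hmem.mp hb))
          ⟨by simpa using h.1, by simpa using h.2⟩
  · obtain ⟨k₀, rfl⟩ := Fin.exists_castSucc_eq.mpr hk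
    have hjk₀ : j₀ < k₀ := Fin.castSucc_lt_castSucc_iff.mp hjk
    have hj₀ : j₀ ≠ Fin.last k := Fin.ne_last_of_lt hjk₀
    have tj : (ext0 σ * Equiv.swap (Fin.last k).castSucc (Fin.last (k+1))) j₀.castSucc
        = (σ j₀).castSucc := by rw [swapext_castSucc, if_neg hj₀]
    rw [ti, tj]
    rcases eq_or_ne k₀ (Fin.last k) with rfl | hk₀
    · rw [swapext_castSucc, if_pos rfl]
      exact ⟨fun _ h => not_last_lt _ h.2, fun _ h => not_last_lt _ h.1⟩
    · rw [swapext_castSucc, if_neg hk₀]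
      have hmem : ((j₀ : ℕ) + 1 ∈ B ↔ (j₀ : ℕ) + 1 ∈ A) := hB _ (by omega)
      obtain ⟨h1, h2⟩ := hσ i₀ j₀ k₀ hij₀ hjk₀
      refine ⟨fun hA' h => ?_, fun hA' h => ?_⟩
      · exact h1 (by simpa using hmem.mpr (by simpa using hA'))
          ⟨by simpa using h.1, by simpa using h.2⟩
      · exact h2 (by simpa using fun hb => hA' (by simpa using hmem.mp hb))
          ⟨by simpa using h.1, by simpa using h.2⟩

/-- Case `k+1 ∉ A`: swap with the bottom alternative of `σ`. -/
lemma mem1B {k : ℕ} {A B : Finset ℕ} (hB : ∀ m : ℕ, m ≤ k + 1 → (m ∈ B ↔ m ∈ A))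
    (hA : (k + 1 : ℕ) ∉ A)
    {σ : Equiv.Perm (Fin (k+1))} (hσ : inSetAltDomain (k+1) B σ) :
    inSetAltDomain (k+2) A
      (ext0 σ * Equiv.swap (σ.symm (Fin.last k)).castSucc (Fin.last (k+1))) := by
  set c₀ : Fin (k+1) := σ.symm (Fin.last k) with hc₀
  have hσc : σ c₀ = Fin.last k := Equiv.apply_symm_apply σ _
  have hlt : ∀ x : Fin (k+1), x ≠ c₀ → σ x < Fin.last k := by
    intro x hx
    refine Fin.lt_last_iff_ne_last.mpr fun h => hx ?_
    rw [← Equiv.symm_apply_apply σ x, h, hc₀]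
  intro i j k₂ hij hjk
  obtain ⟨i₀, rfl⟩ := Fin.exists_castSucc_eq.mpr (Fin.ne_last_of_lt (hij.trans hjk))
  obtain ⟨j₀, rfl⟩ := Fin.exists_castSucc_eq.mpr (Fin.ne_last_of_lt hjk)
  have hij₀ : i₀ < j₀ := Fin.castSucc_lt_castSucc_iff.mp hij
  rcases eq_or_ne k₂ (Fin.last (k+1)) with rfl | hk
  · rw [swapext_last, hσc]
    rcases eq_or_ne i₀ c₀ with rfl | hi₀
    · have hj₀c : j₀ ≠ c₀ := fun h => absurd hij₀ (by rw [h]; exact lt_irrefl _)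
      rw [swapext_castSucc (x := j₀), if_neg hj₀c, swapext_castSucc (x := c₀), if_pos rfl]
      rcases eq_or_ne j₀ (Fin.last k) with rfl | hj₀
      · refine ⟨fun hA' _ => hA (by simpa using hA'), fun _ h => ?_⟩
        exact not_last_lt _ (Fin.castSucc_lt_castSucc_iff.mp h.2)
      · have hj₀' : j₀ < Fin.last k := Fin.lt_last_iff_ne_last.mpr hj₀
        have hlk : Fin.last k ≠ c₀ := fun h => absurd (hij₀.trans hj₀') (by rw [h]; exact lt_irrefl _)
        refine ⟨fun hA' _ => ?_, fun _ h => ?_⟩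
        · obtain ⟨h1, _⟩ := hσ c₀ j₀ (Fin.last k) hij₀ hj₀'
          exact h1 ((hB _ (by omega)).mpr (by simpa using hA'))
            ⟨hσc ▸ hlt j₀ hj₀c, hσc ▸ hlt (Fin.last k) hlk⟩
        · exact not_last_lt _ (Fin.castSucc_lt_castSucc_iff.mp h.2)
    · rw [swapext_castSucc (x := i₀), if_neg hi₀]
      rcases eq_or_ne j₀ c₀ with rfl | hj₀c
      · rw [swapext_castSucc, if_pos rfl]
        exact ⟨fun _ h => not_last_lt _ h.1,
          fun _ h => not_last_lt _ (Fin.castSucc_lt_castSucc_iff.mp h.1)⟩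
      · rw [swapext_castSucc, if_neg hj₀c]
        exact ⟨fun _ h => not_last_lt _ (Fin.castSucc_lt_castSucc_iff.mp h.2),
          fun _ h => not_last_lt _ (Fin.castSucc_lt_castSucc_iff.mp h.1)⟩
  · obtain ⟨k₀, rfl⟩ := Fin.exists_castSucc_eq.mpr hk
    have hjk₀ : j₀ < k₀ := Fin.castSucc_lt_castSucc_iff.mp hjk
    rcases eq_or_ne k₀ c₀ with rfl | hk₀
    · rw [swapext_castSucc (x := c₀), if_pos rfl]
      exact ⟨fun _ h => not_last_lt _ h.2, fun _ h => not_last_lt _ h.1⟩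
    · rw [swapext_castSucc (x := k₀), if_neg hk₀]
      rcases eq_or_ne j₀ c₀ with rfl | hj₀c
      · have hi₀ : i₀ ≠ c₀ := Fin.ne_of_lt hij₀
        rw [swapext_castSucc (x := c₀), if_pos rfl, swapext_castSucc, if_neg hi₀]
        refine ⟨fun _ h => not_last_lt _ h.1, fun hA' h => ?_⟩
        obtain ⟨_, h2⟩ := hσ i₀ c₀ k₀ hij₀ hjk₀
        exact h2 (fun hb => hA' (by simpa using (hB _ (by omega)).mp hb))
          ⟨Fin.castSucc_lt_castSucc_iff.mp h.1, hσc ▸ hlt k₀ hk₀⟩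
      · rw [swapext_castSucc (x := j₀), if_neg hj₀c]
        rcases eq_or_ne i₀ c₀ with rfl | hi₀
        · rw [swapext_castSucc, if_pos rfl]
          refine ⟨fun hA' _ => ?_, fun hA' h => ?_⟩
          · obtain ⟨h1, _⟩ := hσ c₀ j₀ k₀ hij₀ hjk₀
            exact h1 ((hB _ (by omega)).mpr (by simpa using hA'))
              ⟨hσc ▸ hlt j₀ hj₀c, hσc ▸ hlt k₀ hk₀⟩
          · obtain ⟨_, h2⟩ := hσ c₀ j₀ k₀ hij₀ hjk₀
            exact h2 (fun hb => hA' (by simpa using (hB _ (by omega)).mp hb))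
              ⟨hσc ▸ hlt k₀ hk₀, Fin.castSucc_lt_castSucc_iff.mp h.2⟩
        · rw [swapext_castSucc, if_neg hi₀]
          obtain ⟨h1, h2⟩ := hσ i₀ j₀ k₀ hij₀ hjk₀
          refine ⟨fun hA' h => ?_, fun hA' h => ?_⟩
          · exact h1 ((hB _ (by omega)).mpr (by simpa using hA'))
              ⟨Fin.castSucc_lt_castSucc_iff.mp h.1, Fin.castSucc_lt_castSucc_iff.mp h.2⟩
          · exact h2 (fun hb => hA' (by simpa using (hB _ (by omega)).mp hb))
              ⟨Fin.castSucc_lt_castSucc_iff.mp h.1, Fin.castSucc_lt_castSucc_iff.mp h.2⟩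

/-- The key doubling inequality. -/
lemma key_step (k : ℕ) {A B : Finset ℕ} (hB : ∀ m : ℕ, m ≤ k + 1 → (m ∈ B ↔ m ∈ A)) :
    2 * fsize (k+1) B ≤ fsize (k+2) A := by
  classical
  set S : Set (Equiv.Perm (Fin (k+1))) := setAltDomain (k+1) B with hS
  set T : Set (Equiv.Perm (Fin (k+2))) := setAltDomain (k+2) A with hT
  set c : Equiv.Perm (Fin (k+1)) → Fin (k+1) :=
    fun σ => if (k+1 : ℕ) ∈ A then Fin.last k else σ.symm (Fin.last k) with hc
  set g0 : Equiv.Perm (Fin (k+1)) → Equiv.Perm (Fin (k+2)) := fun σ => ext0 σ with hg0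
  set g1 : Equiv.Perm (Fin (k+1)) → Equiv.Perm (Fin (k+2)) :=
    fun σ => ext0 σ * Equiv.swap (c σ).castSucc (Fin.last (k+1)) with hg1
  have ext0_inj : Function.Injective (ext0 (k := k+1)) := by
    intro σ σ' h
    apply Equiv.ext
    intro x
    have := congrArg (fun e : Equiv.Perm (Fin (k+2)) => e x.castSucc) h
    simpa [Fin.castSucc_inj] using this
  have g1_last : ∀ σ, g1 σ (Fin.last (k+1)) = (σ (c σ)).castSucc := fun σ => swapext_last σ (c σ)
  have g1_c : ∀ σ, g1 σ ((c σ).castSucc) = Fin.last (k+1) := by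
    intro σ
    rw [hg1]
    simp only
    rw [swapext_castSucc, if_pos rfl]
  have g1_inj : Function.Injective g1 := by
    intro σ σ' h
    have hcc : (c σ).castSucc = (c σ').castSucc := by
      have h1 := g1_c σ
      have h2 := g1_c σ'
      rw [← h] at h2
      exact (g1 σ).injective (h1.trans h2.symm)
    have : ext0 σ = ext0 σ' := by
      have h3 := congrArg (fun e => e * Equiv.swap (c σ).castSucc (Fin.last (k+1))) h
      simp only [hg1, hcc, mul_assoc, Equiv.swap_mul_self, mul_one] at h3
      exact h3
    exact ext0_inj this
  have hsub0 : g0 '' S ⊆ T := by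
    rintro τ ⟨σ, hσ, rfl⟩
    exact mem0 hB hσ
  have hsub1 : g1 '' S ⊆ T := by
    rintro τ ⟨σ, hσ, rfl⟩
    by_cases hA' : (k + 1 : ℕ) ∈ A
    · have : c σ = Fin.last k := by rw [hc]; simp [hA']
      rw [hg1]; simp only [this]
      exact mem1A hB hA' hσ
    · have : c σ = σ.symm (Fin.last k) := by rw [hc]; simp [hA']
      rw [hg1]; simp only [this]
      exact mem1B hB hA' hσ
  have hdisj : Disjoint (g0 '' S) (g1 '' S) := by
    rw [Set.disjoint_left]
    rintro τ ⟨σ, _, rfl⟩ ⟨σ', _, h⟩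
    have h1 := g1_last σ'
    rw [h] at h1
    have h0 : g0 σ (Fin.last (k+1)) = Fin.last (k+1) := ext0_last σ
    rw [h0] at h1
    exact (Fin.castSucc_lt_last _).ne' h1
  have hcalc : 2 * S.ncard ≤ T.ncard := by
    have e0 : (g0 '' S).ncard = S.ncard := Set.ncard_image_of_injective _ ext0_inj
    have e1 : (g1 '' S).ncard = S.ncard := Set.ncard_image_of_injective _ g1_inj
    have eu : ((g0 '' S) ∪ (g1 '' S)).ncard = (g0 '' S).ncard + (g1 '' S).ncard :=
      Set.ncard_union_eq hdisj (Set.toFinite _) (Set.toFinite _)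
    have hle : ((g0 '' S) ∪ (g1 '' S)).ncard ≤ T.ncard :=
      Set.ncard_le_ncard (Set.union_subset hsub0 hsub1) (Set.toFinite _)
    omega
  exact hcalc

/-- `f_n(A) ≥ 2·f_{n-1}(A ∩ [n-1])` for `n ≥ 2`, and consequently
`f_n(A) ≥ 2^{n-1}` for `n ≥ 1`. -/
theorem stmt7 :
    (∀ n : ℕ, 2 ≤ n → ∀ A : Finset ℕ, A ⊆ Finset.Icc 1 n →
      2 * fsize (n-1) (A ∩ Finset.Icc 1 (n-1)) ≤ fsize n A) ∧
    (∀ n : ℕ, 1 ≤ n → ∀ A : Finset ℕ, A ⊆ Finset.Icc 1 n →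
      2^(n-1) ≤ fsize n A) := by
  have part1 : ∀ n : ℕ, 2 ≤ n → ∀ A : Finset ℕ, A ⊆ Finset.Icc 1 n →
      2 * fsize (n-1) (A ∩ Finset.Icc 1 (n-1)) ≤ fsize n A := by
    intro n hn A hA
    obtain ⟨k, rfl⟩ : ∃ k, n = k + 2 := ⟨n - 2, by omega⟩
    have h1 : k + 2 - 1 = k + 1 := rfl
    rw [h1]
    refine key_step k (fun m hm => ?_)
    simp only [Finset.mem_inter, Finset.mem_Icc]
    constructor
    · rintro ⟨h, _⟩; exact h
    · intro h
      have h2 := hA h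
      simp only [Finset.mem_Icc] at h2
      exact ⟨h, h2.1, hm⟩
  refine ⟨part1, ?_⟩
  intro n hn
  induction n, hn using Nat.le_induction with
  | base =>
    intro A hA
    have hne : (setAltDomain 1 A).Nonempty := by
      refine ⟨1, ?_⟩
      intro i j k hij hjk
      exact absurd hij (by rw [Subsingleton.elim i j]; exact lt_irrefl j)
    have hpos : 0 < fsize 1 A := by
      have := (Set.ncard_pos (Set.toFinite _)).mpr hne
      simpa [fsize] using this
    exact hpos
  | succ n hn ih =>
    intro A hA
    have hstep := part1 (n+1) (by omega) A hA
    have h1 : n + 1 - 1 = n := rfl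
    rw [h1] at hstep ⊢
    have hih := ih (A ∩ Finset.Icc 1 n) Finset.inter_subset_right
    have hpow : 2 * 2 ^ (n - 1) = 2 ^ n := by
      rw [← pow_succ' 2 (n-1), Nat.sub_add_cancel hn]
    rw [← hpow]
    calc 2 * 2 ^ (n-1) ≤ 2 * fsize n (A ∩ Finset.Icc 1 n) := by omega
      _ ≤ fsize (n+1) A := hstep
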